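/- Let N ≥ 2, R ∈ ℝ, and a, b ∈ EuclideanSpace ℝ (Fin N). Then the map I(r) = (R²/‖r − a‖²)·(r − a) + b is differentiable at every r ≠ a, and its Fréchet derivative there is conformal with factor R²/‖r − a‖²: for every vector v, ‖(fderiv ℝ I r) v‖ = (R²/‖r − a‖²) · ‖v‖. -/

import Mathlib

theorem inversion_is_conformal
    {N : ℕ} (hN : 2 ≤ N) (R : ℝ)
    (a b : EuclideanSpace ℝ (Fin N))
    (I : EuclideanSpace ℝ (Fin N) → EuclideanSpace ℝ (Fin N))
    (hI : I = fun r => (R ^ 2 / ‖r - a‖ ^ 2) • (r - a) + b) :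
    ∀ r : EuclideanSpace ℝ (Fin N), r ≠ a →
      DifferentiableAt ℝ I r ∧
        ∀ v : EuclideanSpace ℝ (Fin N),
          ‖(fderiv ℝ I r) v‖ = (R ^ 2 / ‖r - a‖ ^ 2) * ‖v‖ := by
  intro r hr
  have hIeq : I = fun x => EuclideanGeometry.inversion a R x + (b - a) := by
    funext x
    rw [hI]
    simp only [EuclideanGeometry.inversion, dist_eq_norm, div_pow, vsub_eq_sub, vadd_eq_add]
    abel
  have hd := EuclideanGeometry.hasFDerivAt_inversion (c := a) (R := R) hr
  have hd' : HasFDerivAt I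
      ((R / dist r a) ^ 2 • (Submodule.reflection
        (ℝ ∙ (r - a))ᗮ : EuclideanSpace ℝ (Fin N) →L[ℝ] EuclideanSpace ℝ (Fin N))) r := by
    rw [hIeq]
    exact hd.add_const _
  refine ⟨hd'.differentiableAt, fun v => ?_⟩
  rw [hd'.fderiv]
  have h1 : ‖((Submodule.reflection (ℝ ∙ (r - a))ᗮ :
      EuclideanSpace ℝ (Fin N) →L[ℝ] EuclideanSpace ℝ (Fin N))) v‖ = ‖v‖ :=
    (Submodule.reflection (ℝ ∙ (r - a))ᗮ).norm_map v
  rw [ContinuousLinearMap.smul_apply, norm_smul, h1, Real.norm_eq_abs,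
    abs_of_nonneg (by positivity), div_pow, dist_eq_norm]
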